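/- Let L be a group generated by two elements γ₁, γ₂ such that one of the two semigroups generated by {γ₁,γ₂} or by {γ₁,γ₂⁻¹} is free; denote this free semigroup by L⁺. Let L act properly by isometries on a metric space (Y,d) and let μ be an L-invariant positive nonzero Borel measure on Y with Ent(Y,d,μ) ≤ H < ∞. Then no element of L⁺\{e} fixes a point of Y, and for every y ∈ Y: (i) Ent(Y,d,μ) · max( d(y,γ₁y), d(y,γ₂y) ) ≥ ln 2; (ii) min( d(y,γ₁y), d(y,γ₂y) ) > (1/H) · e^{ −H · max( d(y,γ₁y), d(y,γ₂y) ) }. -/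

import Mathlib

open Metric Filter Set
open scoped Classical ENNReal

noncomputable section

/-- The Gromov product `(x|y)_w`. -/
def gromovProd {X : Type*} [MetricSpace X] (w x y : X) : ℝ :=
  (dist w x + dist w y - dist x y) / 2

/-- An arclength-parametrized geodesic segment from `x` to `y`,
defined on `[0, dist x y]`. -/
def IsGeodesicSegment {X : Type*} [MetricSpace X] (f : ℝ → X) (x y : X) : Prop :=
  f 0 = x ∧ f (dist x y) = y ∧
    ∀ s ∈ Set.Icc (0 : ℝ) (dist x y), ∀ t ∈ Set.Icc (0 : ℝ) (dist x y),
      dist (f s) (f t) = |s - t|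

/-- A δ-hyperbolic space: a proper geodesic metric space all of whose geodesic
triangles are δ-thin, in the sense that two points having the same image under the
comparison map onto the associated tripod are at distance at most δ.  (Two points
with the same tripod image lie on two sides issued from a common vertex `x`, at the
same arclength parameter `t ≤ (y|z)_x`.) -/
def IsDeltaHyperbolic (X : Type*) [MetricSpace X] (δ : ℝ) : Prop :=
  ProperSpace X ∧
    (∀ x y : X, ∃ f : ℝ → X, IsGeodesicSegment f x y) ∧
    (∀ x y z : X, ∀ f g : ℝ → X, IsGeodesicSegment f x y → IsGeodesicSegment g x z →
      ∀ t : ℝ, 0 ≤ t → t ≤ gromovProd x y z → dist (f t) (g t) ≤ δ)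

/-- A sequence converging to a point of the Gromov boundary: the Gromov products of
pairs of points of the sequence tend to `+∞`. -/
def IsGromovSeq {X : Type*} [MetricSpace X] (x₀ : X) (u : ℕ → X) : Prop :=
  ∀ C : ℝ, ∃ N : ℕ, ∀ m n : ℕ, N ≤ m → N ≤ n → C ≤ gromovProd x₀ (u m) (u n)

/-- Two Gromov sequences define the same boundary point when their mutual Gromov
products tend to `+∞`. -/
def GromovSeqEquiv {X : Type*} [MetricSpace X] (x₀ : X) (u v : ℕ → X) : Prop :=
  ∀ C : ℝ, ∃ N : ℕ, ∀ m n : ℕ, N ≤ m → N ≤ n → C ≤ gromovProd x₀ (u m) (v n)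

/-- The space is non-elementary: its Gromov boundary has at least three points. -/
def NonElementary (X : Type*) [MetricSpace X] : Prop :=
  ∃ (x₀ : X) (u v w : ℕ → X), IsGromovSeq x₀ u ∧ IsGromovSeq x₀ v ∧ IsGromovSeq x₀ w ∧
    ¬ GromovSeqEquiv x₀ u v ∧ ¬ GromovSeqEquiv x₀ u w ∧ ¬ GromovSeqEquiv x₀ v w

/-- The action of `Γ` on `X` is by isometries. -/
def IsIsometricAction (Γ X : Type*) [Group Γ] [MetricSpace X] [MulAction Γ X] : Prop :=
  ∀ γ : Γ, Isometry fun x : X => γ • x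

/-- The action of `Γ` on `X` is proper. -/
def IsProperAction (Γ X : Type*) [Group Γ] [MetricSpace X] [MulAction Γ X] : Prop :=
  ∀ (x : X) (R : ℝ), {γ : Γ | dist x (γ • x) ≤ R}.Finite

/-- `diam (Γ\X) ≤ D` for the quotient distance `d̄(Γx,Γy) = inf_γ d(x,γy)`. -/
def CodiamLE (Γ X : Type*) [Group Γ] [MetricSpace X] [MulAction Γ X] (D : ℝ) : Prop :=
  ∀ x y : X, sInf {r : ℝ | ∃ γ : Γ, r = dist x (γ • y)} ≤ D

/-- The entropy of `(X,d)` endowed with a proper isometric action of `Γ`, computed with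
the orbit counting measure `μ_xΓ = Σ_γ Dirac (γ • x)` (for a cocompact proper action this
is the common value of the entropies of all invariant measures). -/
def orbitEntropy (Γ : Type*) {X : Type*} [Group Γ] [MetricSpace X] [MulAction Γ X]
    (x : X) : ℝ :=
  liminf (fun R : ℝ => Real.log (Nat.card {γ : Γ // dist x (γ • x) < R}) / R) atTop

/-- The stable (asymptotic) displacement `ℓ(γ) = lim d(x, γⁿ x)/n`
(the limit exists and is independent of `x`; it is expressed here as a `liminf`). -/
def stableDisp {Γ X : Type*} [Group Γ] [MetricSpace X] [MulAction Γ X] (γ : Γ) (x : X) : ℝ :=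
  liminf (fun n : ℕ => dist x (γ ^ n • x) / (n : ℝ)) atTop

/-- The pointwise systole `sys_Γ(x) = inf {d(x,γx) : γ ≠ 1}`. -/
def ptSystole (Γ : Type*) {X : Type*} [Group Γ] [MetricSpace X] [MulAction Γ X] (x : X) : ℝ :=
  sInf {r : ℝ | ∃ γ : Γ, γ ≠ 1 ∧ r = dist x (γ • x)}

/-- The global systole `Sys_Γ(X) = inf_x sys_Γ(x)`. -/
def globSystole (Γ X : Type*) [Group Γ] [MetricSpace X] [MulAction Γ X] : ℝ :=
  sInf {r : ℝ | ∃ x : X, r = ptSystole Γ x}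

/-- The distance of `(X,d)` is convex: for any two affinely reparametrized geodesic
segments `c₁, c₂`, the function `t ↦ d(c₁(t), c₂(t))` is convex on `[0,1]`. -/
def ConvexDist (X : Type*) [MetricSpace X] : Prop :=
  ∀ (x y x' y' : X) (f g : ℝ → X), IsGeodesicSegment f x y → IsGeodesicSegment g x' y' →
    ConvexOn ℝ (Set.Icc (0 : ℝ) 1) fun t => dist (f (t * dist x y)) (g (t * dist x' y'))

/-- `f` is a local geodesic on the set `s ⊆ ℝ`. -/
def IsLocalGeodesic {X : Type*} [MetricSpace X] (f : ℝ → X) (s : Set ℝ) : Prop :=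
  ∀ t ∈ s, ∃ ε > (0 : ℝ), ∀ u ∈ s ∩ Set.Ioo (t - ε) (t + ε), ∀ v ∈ s ∩ Set.Ioo (t - ε) (t + ε),
    dist (f u) (f v) = |u - v|

/-- Every local geodesic defined on a nontrivial segment extends to a local geodesic
defined on all of `ℝ`. -/
def GeodesicallyComplete (X : Type*) [MetricSpace X] : Prop :=
  ∀ (a b : ℝ), a < b → ∀ f : ℝ → X, IsLocalGeodesic f (Set.Icc a b) →
    ∃ g : ℝ → X, IsLocalGeodesic g Set.univ ∧ ∀ t ∈ Set.Icc a b, g t = f t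

/-- The pair `(u,v)` generates a free sub-semigroup: two products of positive powers of
`u` and `v` coincide only when they coincide as words. -/
def FreeSemigroupPair {G : Type*} [Monoid G] (u v : G) : Prop :=
  Function.Injective ⇑(FreeMonoid.lift fun b : Bool => bif b then u else v)

/-- The pair `(u,v)` generates a free subgroup, free on `{u,v}`. -/
def FreeGroupPair {G : Type*} [Group G] (u v : G) : Prop :=
  Function.Injective ⇑(FreeGroup.lift fun b : Bool => bif b then u else v)

/-- A group is virtually cyclic if it has a cyclic subgroup of finite index. -/
def VirtuallyCyclic (G : Type*) [Group G] : Prop :=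
  ∃ H : Subgroup G, H.FiniteIndex ∧ IsCyclic ↥H

/-- The stable displacement of an isometry `g` of `X`. -/
def stableDispIso {X : Type*} [MetricSpace X] (g : X ≃ᵢ X) (x : X) : ℝ :=
  liminf (fun n : ℕ => dist x ((g ^ n) x) / (n : ℝ)) atTop

/-- The minimal displacement `s(g) = inf_x d(x, g x)` of an isometry `g` of `X`. -/
def minDisp {X : Type*} [MetricSpace X] (g : X ≃ᵢ X) : ℝ :=
  ⨅ x : X, dist x (g x)

/-- Discreteness of a subgroup of the isometry group of a proper metric space,
expressed equivalently by the properness of its natural action. -/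
def DiscreteIsomSubgroup {X : Type*} [MetricSpace X] (H : Subgroup (X ≃ᵢ X)) : Prop :=
  ∀ (x : X) (R : ℝ), {g : X ≃ᵢ X | g ∈ H ∧ dist x (g x) ≤ R}.Finite

/-- The Margulis constant `L(a,b)` of a pair of isometries. -/
def margulisConst {X : Type*} [MetricSpace X] (a b : X ≃ᵢ X) : ℝ :=
  sInf {r : ℝ | ∃ (x : X) (p q : ℤ), p ≠ 0 ∧ q ≠ 0 ∧ a ^ p ≠ 1 ∧ b ^ q ≠ 1 ∧
    r = max (dist x ((a ^ p) x)) (dist x ((b ^ q) x))}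

/-- Word length with respect to a generating set `S` (words in `S ∪ S⁻¹`). -/
def wordLength {Γ : Type*} [Group Γ] (S : Set Γ) (γ : Γ) : ℕ :=
  sInf {n : ℕ | ∃ l : List Γ, l.length = n ∧ (∀ s ∈ l, s ∈ S ∨ s⁻¹ ∈ S) ∧ l.prod = γ}

/-- The algebraic entropy `Ent(Γ,Σ)` of a group with respect to a generating set. -/
def algEntropy (Γ : Type*) [Group Γ] (S : Set Γ) : ℝ :=
  liminf (fun R : ℝ => Real.log (Nat.card {γ : Γ // (wordLength S γ : ℝ) ≤ R}) / R) atTop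

/-- `(C, ι)` is a metric realization of the Cayley graph of `(Γ,S)`: `Γ` acts on `C` by
isometries, `ι` is the equivariant vertex embedding, the distance between vertices is the
word distance, and every point of `C` is within distance `1/2` of a vertex. -/
def IsCayleyRealization (Γ : Type*) [Group Γ] (S : Set Γ) (C : Type*) [MetricSpace C]
    [MulAction Γ C] (ι : Γ → C) : Prop :=
  IsIsometricAction Γ C ∧
    (∀ γ g : Γ, ι (γ * g) = γ • ι g) ∧
    (∀ γ g : Γ, dist (ι γ) (ι g) = (wordLength S (γ⁻¹ * g) : ℝ)) ∧
    (∀ x : C, ∃ γ : Γ, dist x (ι γ) ≤ 1 / 2)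

/-- An `α`-HT (`α`-hyperbolically thick) action: an isometric action on a δ-hyperbolic
space all of whose nontrivial elements have stable displacement at least `α`. -/
def IsHTAction (Γ X : Type*) [Group Γ] [MetricSpace X] [MulAction Γ X] (δ α : ℝ) : Prop :=
  IsDeltaHyperbolic X δ ∧ IsIsometricAction Γ X ∧
    ∀ γ : Γ, γ ≠ 1 → ∀ x : X, α ≤ stableDisp γ x

/-- Witness of an `α`-HT action of `Γ` on some δ-hyperbolic space. -/
structure HTWitness (Γ : Type*) [Group Γ] (δ α : ℝ) where
  X : Type
  [ms : MetricSpace X]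
  [ma : MulAction Γ X]
  cond : IsHTAction Γ X δ α

/-- A `(δ,α)`-HT group: non-cyclic, admitting an `α`-HT isometric action on some
δ-hyperbolic space. -/
def IsHTGroup (Γ : Type*) [Group Γ] (δ α : ℝ) : Prop :=
  ¬ IsCyclic Γ ∧ Nonempty (HTWitness Γ δ α)

/-- Witness for the `(δ,α)`-non-abelian condition on a non-commuting pair `a, b`:
a morphism from `⟨a,b⟩` to a `(δ,α)`-HT group whose image is isomorphic neither to the
trivial group nor to `ℤ`. -/
structure NonAbWitness {Γ : Type*} [Group Γ] (δ α : ℝ) (a b : Γ) where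
  G : Type
  [grp : Group G]
  ρ : ↥(Subgroup.closure ({a, b} : Set Γ)) →* G
  ht : IsHTGroup G δ α
  ntriv : ρ.range ≠ ⊥
  notZ : ¬ Nonempty (↥ρ.range ≃* Multiplicative ℤ)

/-- A `(δ,α)`-non-abelian group. -/
def NonAbelianDA (Γ : Type*) [Group Γ] (δ α : ℝ) : Prop :=
  (∃ a b : Γ, a * b ≠ b * a) ∧
    ∀ a b : Γ, a * b ≠ b * a → Nonempty (NonAbWitness δ α a b)

/-- A `(δ,α)`-transitive non-abelian group: `(δ,α)`-non-abelian, and commutation is a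
transitive relation on `Γ \ {1}`. -/
def TransNonAbelianDA (Γ : Type*) [Group Γ] (δ α : ℝ) : Prop :=
  NonAbelianDA Γ δ α ∧
    ∀ a b c : Γ, a ≠ 1 → b ≠ 1 → c ≠ 1 → a * b = b * a → b * c = c * b → a * c = c * a

/-- Extended-real logarithm of an extended nonnegative real. -/
def ennlog (x : ENNReal) : EReal :=
  if x = 0 then ⊥ else if x = ⊤ then ⊤ else ((Real.log x.toReal : ℝ) : EReal)

/-- The entropy of a metric measure space,
`Ent(Y,d,μ) = liminf_{R→∞} (1/R) ln μ(B(y,R))`, valued in `EReal`. -/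
def mmEntropy {Y : Type*} [MetricSpace Y] [MeasurableSpace Y] (μ : MeasureTheory.Measure Y) (y : Y) : EReal :=
  liminf (fun R : ℝ => ((R⁻¹ : ℝ) : EReal) * ennlog (μ (Metric.ball y R))) atTop

end
noncomputable section AuxFreeSemigroup

open Metric Filter Set
open scoped Classical ENNReal

/-- weight of a word in two generators -/
def auxWt (w₁ w₂ : ℝ) (l : List Bool) : ℝ := (l.map fun x => bif x then w₁ else w₂).sum

theorem auxWt_nil (w₁ w₂ : ℝ) : auxWt w₁ w₂ [] = 0 := rfl

theorem auxWt_cons (w₁ w₂ : ℝ) (x : Bool) (l : List Bool) :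
    auxWt w₁ w₂ (x :: l) = (bif x then w₁ else w₂) + auxWt w₁ w₂ l := by
  simp [auxWt]

theorem auxWt_ge (w₁ w₂ : ℝ) (h1 : 0 < w₁) (h2 : 0 < w₂) (l : List Bool) :
    min w₁ w₂ * l.length ≤ auxWt w₁ w₂ l := by
  induction l with
  | nil => simp [auxWt_nil]
  | cons x l ih =>
    rw [auxWt_cons]
    have hx : min w₁ w₂ ≤ bif x then w₁ else w₂ := by
      cases x
      · exact min_le_right _ _
      · exact min_le_left _ _
    simp only [List.length_cons]
    push_cast
    nlinarith

theorem auxWt_nonneg (w₁ w₂ : ℝ) (h1 : 0 < w₁) (h2 : 0 < w₂) (l : List Bool) :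
    0 ≤ auxWt w₁ w₂ l := by
  have := auxWt_ge w₁ w₂ h1 h2 l
  have hmin : 0 < min w₁ w₂ := lt_min h1 h2
  nlinarith [Nat.cast_nonneg (α := ℝ) l.length]

/-- all words of a given length -/
def auxWordsLen : ℕ → Finset (List Bool)
  | 0 => {[]}
  | n + 1 => ((auxWordsLen n).image (List.cons true)) ∪ ((auxWordsLen n).image (List.cons false))

theorem auxMem_wordsLen : ∀ (n : ℕ) (l : List Bool), l ∈ auxWordsLen n ↔ l.length = n := by
  intro n
  induction n with
  | zero => intro l; simp [auxWordsLen, List.length_eq_zero_iff]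
  | succ n ih =>
    intro l
    simp only [auxWordsLen, Finset.mem_union, Finset.mem_image]
    constructor
    · rintro (⟨t, ht, rfl⟩ | ⟨t, ht, rfl⟩) <;> simp [(ih t).1 ht]
    · intro hl
      cases l with
      | nil => simp at hl
      | cons x t =>
        have ht : t ∈ auxWordsLen n := (ih t).2 (by simpa using hl)
        cases x
        · exact Or.inr ⟨t, ht, rfl⟩
        · exact Or.inl ⟨t, ht, rfl⟩

/-- all words of weight at most `L` -/
def auxWordFin (w₁ w₂ : ℝ) (L : ℝ) : Finset (List Bool) :=
  ((Finset.range (⌊L / min w₁ w₂⌋₊ + 1)).biUnion auxWordsLen).filter fun l => auxWt w₁ w₂ l ≤ L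

theorem auxMem_wordFin (w₁ w₂ : ℝ) (h1 : 0 < w₁) (h2 : 0 < w₂) (L : ℝ) (l : List Bool) :
    l ∈ auxWordFin w₁ w₂ L ↔ auxWt w₁ w₂ l ≤ L := by
  simp only [auxWordFin, Finset.mem_filter, Finset.mem_biUnion, Finset.mem_range, auxMem_wordsLen]
  constructor
  · exact fun h => h.2
  · intro h
    refine ⟨⟨l.length, ?_, rfl⟩, h⟩
    have hmin : 0 < min w₁ w₂ := lt_min h1 h2
    have hge := auxWt_ge w₁ w₂ h1 h2 l
    have hlen : (l.length : ℝ) ≤ L / min w₁ w₂ := by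
      rw [le_div_iff₀ hmin]
      nlinarith
    have := Nat.le_floor hlen
    omega

theorem auxWordFin_growth (w₁ w₂ : ℝ) (h1 : 0 < w₁) (h2 : 0 < w₂) (s : ℝ) (hs : 0 < s)
    (hsum : 1 ≤ Real.exp (-(s * w₁)) + Real.exp (-(s * w₂))) :
    ∀ L : ℝ, 0 ≤ L → Real.exp (s * (L - max w₁ w₂)) ≤ ((auxWordFin w₁ w₂ L).card : ℝ) := by
  have hmin : 0 < min w₁ w₂ := lt_min h1 h2
  suffices key : ∀ n : ℕ, ∀ L : ℝ, 0 ≤ L → L < n * min w₁ w₂ →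
      Real.exp (s * (L - max w₁ w₂)) ≤ ((auxWordFin w₁ w₂ L).card : ℝ) by
    intro L hL
    obtain ⟨n, hn⟩ := exists_nat_gt (L / min w₁ w₂)
    exact key n L hL ((div_lt_iff₀ hmin).1 hn)
  intro n
  induction n with
  | zero =>
    intro L hL hLn
    norm_num at hLn
    linarith
  | succ n ih =>
    intro L hL hLn
    rcases lt_or_ge L (max w₁ w₂) with hcase | hcase
    · have hmem : [] ∈ auxWordFin w₁ w₂ L := by
        rw [auxMem_wordFin w₁ w₂ h1 h2]
        rw [auxWt_nil]; exact hL
      have hcard : 1 ≤ ((auxWordFin w₁ w₂ L).card : ℝ) := by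
        exact_mod_cast Finset.card_pos.2 ⟨[], hmem⟩
      have hexp : Real.exp (s * (L - max w₁ w₂)) ≤ 1 :=
        Real.exp_le_one_iff.2 (by nlinarith)
      linarith
    · have hw1L : 0 ≤ L - w₁ := by
        have := le_max_left w₁ w₂; linarith
      have hw2L : 0 ≤ L - w₂ := by
        have := le_max_right w₁ w₂; linarith
      have hb1 : L - w₁ < n * min w₁ w₂ := by
        have h := min_le_left w₁ w₂
        push_cast at hLn ⊢
        nlinarith
      have hb2 : L - w₂ < n * min w₁ w₂ := by
        have h := min_le_right w₁ w₂
        push_cast at hLn ⊢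
        nlinarith
      have e1 := ih (L - w₁) hw1L hb1
      have e2 := ih (L - w₂) hw2L hb2
      have hsub : ((auxWordFin w₁ w₂ (L - w₁)).image (List.cons true)) ∪
          ((auxWordFin w₁ w₂ (L - w₂)).image (List.cons false)) ⊆ auxWordFin w₁ w₂ L := by
        intro l hl
        simp only [Finset.mem_union, Finset.mem_image] at hl
        rcases hl with ⟨t, ht, rfl⟩ | ⟨t, ht, rfl⟩
        · rw [auxMem_wordFin w₁ w₂ h1 h2] at ht ⊢
          rw [auxWt_cons]
          simp only [cond_true]
          linarith
        · rw [auxMem_wordFin w₁ w₂ h1 h2] at ht ⊢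
          rw [auxWt_cons]
          simp only [cond_false]
          linarith
      have hdisj : Disjoint ((auxWordFin w₁ w₂ (L - w₁)).image (List.cons true))
          ((auxWordFin w₁ w₂ (L - w₂)).image (List.cons false)) := by
        rw [Finset.disjoint_left]
        intro l hl1 hl2
        simp only [Finset.mem_image] at hl1 hl2
        obtain ⟨t, _, rfl⟩ := hl1
        obtain ⟨t', _, h⟩ := hl2
        simp at h
      have hcard := Finset.card_le_card hsub
      rw [Finset.card_union_of_disjoint hdisj,
        Finset.card_image_of_injective _ List.cons_injective,
        Finset.card_image_of_injective _ List.cons_injective] at hcard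
      have hrec : ((auxWordFin w₁ w₂ (L - w₁)).card : ℝ) + ((auxWordFin w₁ w₂ (L - w₂)).card : ℝ)
          ≤ ((auxWordFin w₁ w₂ L).card : ℝ) := by exact_mod_cast hcard
      have hident : Real.exp (s * (L - w₁ - max w₁ w₂)) + Real.exp (s * (L - w₂ - max w₁ w₂))
          = Real.exp (s * (L - max w₁ w₂)) * (Real.exp (-(s * w₁)) + Real.exp (-(s * w₂))) := by
        rw [mul_add, ← Real.exp_add, ← Real.exp_add]
        ring_nf
      have h3 : Real.exp (s * (L - max w₁ w₂)) * 1
          ≤ Real.exp (s * (L - max w₁ w₂)) * (Real.exp (-(s * w₁)) + Real.exp (-(s * w₂))) :=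
        mul_le_mul_of_nonneg_left hsum (Real.exp_pos _).le
      linarith

theorem aux_nofix {Γ : Type*} [Group Γ] {Y : Type*} [MetricSpace Y] [MulAction Γ Y]
    (a b : Γ) (hfree : FreeSemigroupPair a b) (hproper : IsProperAction Γ Y) :
    ∀ g ∈ Submonoid.closure ({a, b} : Set Γ), g ≠ 1 → ∀ y : Y, g • y ≠ y := by
  intro g hg hg1 y hy
  have hrange : Set.range (fun x : Bool => bif x then a else b) = ({a, b} : Set Γ) := by
    ext x
    simp only [Set.mem_range, Set.mem_insert_iff, Set.mem_singleton_iff]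
    constructor
    · rintro ⟨(_ | _), rfl⟩
      · exact Or.inr rfl
      · exact Or.inl rfl
    · rintro (rfl | rfl)
      · exact ⟨true, rfl⟩
      · exact ⟨false, rfl⟩
  have hmem : g ∈ MonoidHom.mrange (FreeMonoid.lift fun x : Bool => bif x then a else b) := by
    rw [FreeMonoid.mrange_lift, hrange]
    exact hg
  obtain ⟨l, hl⟩ := hmem
  have hlne : l ≠ 1 := by
    rintro rfl
    exact hg1 (by rw [← hl, map_one])
  have hfix : ∀ n : ℕ, g ^ n • y = y := by
    intro n
    induction n with
    | zero => rw [pow_zero, one_smul]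
    | succ n ih => rw [pow_succ, mul_smul, hy, ih]
  have hlen : ∀ k : ℕ, (l ^ k).length = k * l.length := by
    intro k
    induction k with
    | zero => simp
    | succ k ih => rw [pow_succ, FreeMonoid.length_mul, ih]; ring
  have hinj : Function.Injective fun n : ℕ => g ^ n := by
    intro m n hmn
    have h2 : l ^ m = l ^ n := hfree (by rw [map_pow, map_pow, hl]; exact hmn)
    have h3 := congrArg FreeMonoid.length h2
    rw [hlen, hlen] at h3
    have h4 : l.length ≠ 0 := fun h => hlne (FreeMonoid.length_eq_zero.1 h)
    exact Nat.eq_of_mul_eq_mul_right (Nat.pos_of_ne_zero h4) h3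
  exact (Set.infinite_of_injective_forall_mem hinj fun n => by
    simp only [Set.mem_setOf_eq, hfix n, dist_self, le_refl]) (hproper y 0)

theorem aux_entropy_lb {Γ : Type*} [Group Γ] {Y : Type*} [MetricSpace Y]
    [MeasurableSpace Y] [BorelSpace Y] [MulAction Γ Y]
    (a b : Γ) (hfree : FreeSemigroupPair a b)
    (hiso : IsIsometricAction Γ Y) (hproper : IsProperAction Γ Y)
    (μ : MeasureTheory.Measure Y) (hμ : μ ≠ 0)
    (hinv : ∀ γ : Γ, MeasureTheory.MeasurePreserving (fun y : Y => γ • y) μ μ)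
    (y : Y) (s : ℝ) (hs : 0 < s)
    (hsum : 1 ≤ Real.exp (-(s * dist y (a • y))) + Real.exp (-(s * dist y (b • y)))) :
    (s : EReal) ≤ mmEntropy μ y := by
  classical
  set w₁ := dist y (a • y) with hw₁def
  set w₂ := dist y (b • y) with hw₂def
  have ha1 : a ≠ 1 := by
    intro h
    have h2 : (FreeMonoid.lift fun x : Bool => bif x then a else b) (FreeMonoid.of true)
        = (FreeMonoid.lift fun x : Bool => bif x then a else b) 1 := by
      rw [map_one, FreeMonoid.lift_eval_of]
      exact h
    exact FreeMonoid.of_ne_one true (hfree h2)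
  have hb1 : b ≠ 1 := by
    intro h
    have h2 : (FreeMonoid.lift fun x : Bool => bif x then a else b) (FreeMonoid.of false)
        = (FreeMonoid.lift fun x : Bool => bif x then a else b) 1 := by
      rw [map_one, FreeMonoid.lift_eval_of]
      exact h
    exact FreeMonoid.of_ne_one false (hfree h2)
  have hw1 : 0 < w₁ :=
    dist_pos.2 (Ne.symm (aux_nofix a b hfree hproper a
      (Submonoid.subset_closure (Set.mem_insert _ _)) ha1 y))
  have hw2 : 0 < w₂ :=
    dist_pos.2 (Ne.symm (aux_nofix a b hfree hproper b
      (Submonoid.subset_closure (Set.mem_insert_of_mem _ rfl)) hb1 y))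
  -- the word-to-group map
  set φ : List Bool → Γ :=
    fun l => (FreeMonoid.lift fun x : Bool => bif x then a else b) (FreeMonoid.ofList l) with hφdef
  have hφinj : Function.Injective φ := fun l l' h => FreeMonoid.ofList.injective (hfree h)
  have hφnil : φ [] = 1 := map_one _
  have hφcons : ∀ (x : Bool) (l : List Bool), φ (x :: l) = (bif x then a else b) * φ l := by
    intro x l
    have h1 : FreeMonoid.ofList (x :: l) = FreeMonoid.of x * FreeMonoid.ofList l := rfl
    rw [hφdef]
    simp only [h1, map_mul, FreeMonoid.lift_eval_of]
  have hdisp : ∀ l : List Bool, dist y (φ l • y) ≤ auxWt w₁ w₂ l := by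
    intro l
    induction l with
    | nil => rw [hφnil, one_smul, dist_self, auxWt_nil]
    | cons x l ih =>
      rw [hφcons, mul_smul, auxWt_cons]
      have hI : dist ((bif x then a else b) • y) ((bif x then a else b) • (φ l • y))
          = dist y (φ l • y) := (hiso (bif x then a else b)).dist_eq y (φ l • y)
      have hd : dist y ((bif x then a else b) • y) = bif x then w₁ else w₂ := by
        cases x <;> rfl
      calc dist y ((bif x then a else b) • (φ l • y))
          ≤ dist y ((bif x then a else b) • y)
            + dist ((bif x then a else b) • y) ((bif x then a else b) • (φ l • y)) :=
            dist_triangle _ _ _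
        _ = (bif x then w₁ else w₂) + dist y (φ l • y) := by rw [hI, hd]
        _ ≤ (bif x then w₁ else w₂) + auxWt w₁ w₂ l := by linarith
  -- a ball with positive measure
  obtain ⟨n₀, hn₀⟩ : ∃ n : ℕ, μ (Metric.ball y ((n : ℝ) + 1)) ≠ 0 := by
    by_contra hconc
    push_neg at hconc
    apply hμ
    have huniv : (Set.univ : Set Y) ⊆ ⋃ n : ℕ, Metric.ball y ((n : ℝ) + 1) := by
      intro z _
      obtain ⟨n, hn⟩ := exists_nat_gt (dist z y)
      exact Set.mem_iUnion.2 ⟨n, by rw [Metric.mem_ball]; linarith⟩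
    have h1 : μ Set.univ = 0 := by
      refine le_antisymm ?_ zero_le
      calc μ Set.univ ≤ μ (⋃ n : ℕ, Metric.ball y ((n : ℝ) + 1)) :=
            MeasureTheory.measure_mono huniv
        _ ≤ ∑' n : ℕ, μ (Metric.ball y ((n : ℝ) + 1)) := MeasureTheory.measure_iUnion_le _
        _ = 0 := by simp [hconc]
    exact MeasureTheory.Measure.measure_univ_eq_zero.1 h1
  set R₀ : ℝ := (n₀ : ℝ) + 1 with hR₀def
  have hR₀pos : 0 < R₀ := by positivity
  set v := μ (Metric.ball y R₀) with hvdef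
  have hv : v ≠ 0 := hn₀
  set F₂ := (hproper y (2 * R₀)).toFinset with hF₂def
  set N₀ := F₂.card with hN₀def
  have hN₀pos : 0 < N₀ := by
    refine Finset.card_pos.2 ⟨1, ?_⟩
    rw [hF₂def, Set.Finite.mem_toFinset]
    simp only [Set.mem_setOf_eq, one_smul, dist_self]
    positivity
  -- translated balls have the same measure
  have hballγ : ∀ γ : Γ, μ (Metric.ball (γ • y) R₀) = v := by
    intro γ
    have hpre : Metric.ball (γ • y) R₀ = (fun z : Y => γ⁻¹ • z) ⁻¹' Metric.ball y R₀ := by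
      ext z
      simp only [Set.mem_preimage, Metric.mem_ball]
      have hI : dist (γ⁻¹ • z) (γ⁻¹ • (γ • y)) = dist z (γ • y) :=
        (hiso γ⁻¹).dist_eq z (γ • y)
      rw [inv_smul_smul] at hI
      rw [← hI]
    rw [hpre, (hinv γ⁻¹).measure_preimage measurableSet_ball.nullMeasurableSet]
  -- the key measure inequality
  have hkey : ∀ L : ℝ, 0 ≤ L →
      ((auxWordFin w₁ w₂ L).card : ℝ≥0∞) * v ≤ (N₀ : ℝ≥0∞) * μ (Metric.ball y (L + R₀)) := by
    intro L hL
    set P := auxWordFin w₁ w₂ L with hP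
    have hmeas : ∀ l : List Bool, MeasurableSet (Metric.ball (φ l • y) R₀) :=
      fun l => measurableSet_ball
    have hsum1 : ∑ l ∈ P, μ (Metric.ball (φ l • y) R₀) = (P.card : ℝ≥0∞) * v := by
      rw [Finset.sum_congr rfl fun l _ => hballγ (φ l), Finset.sum_const, nsmul_eq_mul]
    have hptwise : ∀ z : Y,
        (∑ l ∈ P, (Metric.ball (φ l • y) R₀).indicator (1 : Y → ℝ≥0∞) z)
        ≤ (N₀ : ℝ≥0∞) * (Metric.ball y (L + R₀)).indicator (1 : Y → ℝ≥0∞) z := by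
      intro z
      set T := P.filter (fun l => z ∈ Metric.ball (φ l • y) R₀) with hT
      have hLHS : (∑ l ∈ P, (Metric.ball (φ l • y) R₀).indicator (1 : Y → ℝ≥0∞) z)
          = (T.card : ℝ≥0∞) := by
        rw [hT, Finset.card_filter]
        push_cast
        refine Finset.sum_congr rfl fun l _ => ?_
        simp [Set.indicator_apply]
      rcases T.eq_empty_or_nonempty with hTe | ⟨l₀, hl₀⟩
      · rw [hLHS, hTe]
        simp
      · have hzb₀ : z ∈ Metric.ball (φ l₀ • y) R₀ := (Finset.mem_filter.1 hl₀).2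
        have hl₀P : l₀ ∈ P := (Finset.mem_filter.1 hl₀).1
        have hd₀ : dist y (φ l₀ • y) ≤ L := by
          have h1 := hdisp l₀
          have h2 := (auxMem_wordFin w₁ w₂ hw1 hw2 L l₀).1 hl₀P
          linarith
        have hzball : z ∈ Metric.ball y (L + R₀) := by
          rw [Metric.mem_ball] at hzb₀ ⊢
          calc dist z y ≤ dist z (φ l₀ • y) + dist (φ l₀ • y) y := dist_triangle _ _ _
            _ < R₀ + L := by
                rw [dist_comm (φ l₀ • y) y]
                linarith
            _ = L + R₀ := by ring
        have hcardT : T.card ≤ N₀ := by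
          refine Finset.card_le_card_of_injOn (fun l => (φ l₀)⁻¹ * φ l) ?_ ?_
          · intro l hl
            rw [Finset.mem_coe, hF₂def, Set.Finite.mem_toFinset]
            have he : (φ l₀) • (((φ l₀)⁻¹ * φ l) • y) = φ l • y := by
              rw [← mul_smul, mul_inv_cancel_left]
            have hI : dist (φ l₀ • y) ((φ l₀) • (((φ l₀)⁻¹ * φ l) • y))
                = dist y (((φ l₀)⁻¹ * φ l) • y) :=
              (hiso (φ l₀)).dist_eq y (((φ l₀)⁻¹ * φ l) • y)
            rw [he] at hI
            show dist y (((φ l₀)⁻¹ * φ l) • y) ≤ 2 * R₀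
            rw [← hI]
            have hz1 : dist z (φ l₀ • y) < R₀ := Metric.mem_ball.1 hzb₀
            have hz2 : dist z (φ l • y) < R₀ := Metric.mem_ball.1 (Finset.mem_filter.1 (Finset.mem_coe.1 hl)).2
            calc dist (φ l₀ • y) (φ l • y) ≤ dist (φ l₀ • y) z + dist z (φ l • y) :=
                  dist_triangle _ _ _
              _ ≤ 2 * R₀ := by
                  rw [dist_comm (φ l₀ • y) z]
                  linarith
          · intro l _ l' _ he
            exact hφinj (mul_left_cancel he)
        rw [hLHS, Set.indicator_of_mem hzball, Pi.one_apply]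
        calc (T.card : ℝ≥0∞) ≤ (N₀ : ℝ≥0∞) := by exact_mod_cast hcardT
          _ = (N₀ : ℝ≥0∞) * 1 := (mul_one _).symm
    calc (P.card : ℝ≥0∞) * v = ∑ l ∈ P, μ (Metric.ball (φ l • y) R₀) := hsum1.symm
      _ = ∑ l ∈ P, ∫⁻ z, (Metric.ball (φ l • y) R₀).indicator (1 : Y → ℝ≥0∞) z ∂μ := by
          refine Finset.sum_congr rfl fun l _ => ?_
          rw [MeasureTheory.lintegral_indicator_one (hmeas l)]
      _ = ∫⁻ z, ∑ l ∈ P, (Metric.ball (φ l • y) R₀).indicator (1 : Y → ℝ≥0∞) z ∂μ :=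
          (MeasureTheory.lintegral_finset_sum _ fun l _ =>
            measurable_one.indicator (hmeas l)).symm
      _ ≤ ∫⁻ z, (N₀ : ℝ≥0∞) * (Metric.ball y (L + R₀)).indicator (1 : Y → ℝ≥0∞) z ∂μ :=
          MeasureTheory.lintegral_mono hptwise
      _ = (N₀ : ℝ≥0∞) * μ (Metric.ball y (L + R₀)) := by
          have hm1 : Measurable ((Metric.ball y (L + R₀)).indicator (1 : Y → ℝ≥0∞)) :=
            measurable_one.indicator measurableSet_ball
          rw [MeasureTheory.lintegral_const_mul _ hm1,
            MeasureTheory.lintegral_indicator_one measurableSet_ball]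
  -- conclude via liminf
  unfold mmEntropy
  refine (le_liminf_iff (by isBoundedDefault) (by isBoundedDefault)).2 ?_
  intro cE hcE
  obtain ⟨c', hc1, hc2⟩ := exists_between hcE
  have hct : c' ≠ ⊤ := (hc2.trans (EReal.coe_lt_top s)).ne
  have hcb : c' ≠ ⊥ := (lt_of_le_of_lt bot_le hc1).ne'
  set t := c'.toReal with htdef
  have hc't : c' = (t : EReal) := (EReal.coe_toReal hct hcb).symm
  have hts : t < s := by
    rw [hc't] at hc2
    exact_mod_cast hc2
  set Mx := max w₁ w₂ with hMxdef
  by_cases hvtop : v = ⊤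
  · filter_upwards [eventually_ge_atTop (R₀ + 1)] with R hR
    have hRpos : 0 < R := by linarith
    have hsub : Metric.ball y R₀ ⊆ Metric.ball y R := Metric.ball_subset_ball (by linarith)
    have hμR : μ (Metric.ball y R) = ⊤ := by
      refine eq_top_iff.2 ?_
      rw [← hvtop]
      exact MeasureTheory.measure_mono hsub
    rw [hμR]
    have h1 : ennlog ⊤ = ⊤ := by simp [ennlog]
    rw [h1, EReal.mul_top_of_pos (by exact_mod_cast inv_pos.2 hRpos : (0 : EReal) < (R⁻¹ : ℝ))]
    exact hcE.trans_le le_top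
  · have hvr : 0 < v.toReal := ENNReal.toReal_pos hv hvtop
    set K := Real.log (v.toReal) - Real.log (N₀ : ℝ) - s * (R₀ + Mx) with hKdef
    filter_upwards [eventually_ge_atTop (max (R₀ + 1) (|K| / (s - t) + 1))] with R hR
    have hRR₀ : R₀ + 1 ≤ R := le_trans (le_max_left _ _) hR
    have hRK : |K| / (s - t) + 1 ≤ R := le_trans (le_max_right _ _) hR
    have hRpos : 0 < R := by linarith
    have hsub : Metric.ball y R₀ ⊆ Metric.ball y R := Metric.ball_subset_ball (by linarith)
    have hμRv : v ≤ μ (Metric.ball y R) := MeasureTheory.measure_mono hsub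
    have hμR0 : μ (Metric.ball y R) ≠ 0 := fun h => hv (le_antisymm (h ▸ hμRv) zero_le)
    by_cases htop : μ (Metric.ball y R) = ⊤
    · rw [htop]
      have h1 : ennlog ⊤ = ⊤ := by simp [ennlog]
      rw [h1, EReal.mul_top_of_pos (by exact_mod_cast inv_pos.2 hRpos : (0 : EReal) < (R⁻¹ : ℝ))]
      exact hcE.trans_le le_top
    · have hL0 : (0 : ℝ) ≤ R - R₀ := by linarith
      have hcard := auxWordFin_growth w₁ w₂ hw1 hw2 s hs hsum (R - R₀) hL0
      have hkey' := hkey (R - R₀) hL0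
      have hRR : R - R₀ + R₀ = R := by ring
      rw [hRR] at hkey'
      have hrhs_ne : (N₀ : ℝ≥0∞) * μ (Metric.ball y R) ≠ ⊤ :=
        ENNReal.mul_ne_top (by simp) htop
      have hreal := ENNReal.toReal_mono hrhs_ne hkey'
      rw [ENNReal.toReal_mul, ENNReal.toReal_mul, ENNReal.toReal_natCast,
        ENNReal.toReal_natCast] at hreal
      have hcardv : Real.exp (s * (R - R₀ - Mx)) * v.toReal
          ≤ ((auxWordFin w₁ w₂ (R - R₀)).card : ℝ) * v.toReal :=
        mul_le_mul_of_nonneg_right hcard hvr.le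
      have hN₀r : (0 : ℝ) < (N₀ : ℝ) := by exact_mod_cast hN₀pos
      have hlow : Real.exp (s * (R - R₀ - Mx)) * v.toReal / (N₀ : ℝ)
          ≤ (μ (Metric.ball y R)).toReal := by
        rw [div_le_iff₀ hN₀r]
        calc Real.exp (s * (R - R₀ - Mx)) * v.toReal
            ≤ ((auxWordFin w₁ w₂ (R - R₀)).card : ℝ) * v.toReal := hcardv
          _ ≤ (N₀ : ℝ) * (μ (Metric.ball y R)).toReal := hreal
          _ = (μ (Metric.ball y R)).toReal * (N₀ : ℝ) := by ring
      have hlpos : 0 < Real.exp (s * (R - R₀ - Mx)) * v.toReal / (N₀ : ℝ) :=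
        div_pos (mul_pos (Real.exp_pos _) hvr) hN₀r
      have hlog : s * R + K ≤ Real.log (μ (Metric.ball y R)).toReal := by
        have h1 := Real.log_le_log hlpos hlow
        rw [Real.log_div (ne_of_gt (mul_pos (Real.exp_pos _) hvr)) (ne_of_gt hN₀r),
          Real.log_mul (Real.exp_ne_zero _) (ne_of_gt hvr), Real.log_exp] at h1
        rw [hKdef]
        nlinarith
      simp only [ennlog, if_neg hμR0, if_neg htop]
      rw [← EReal.coe_mul]
      refine lt_of_lt_of_le hc1 ?_
      rw [hc't, EReal.coe_le_coe_iff]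
      have hst : 0 < s - t := by linarith
      have habs : |K| < (s - t) * R := by
        have h2 : |K| / (s - t) * (s - t) = |K| := div_mul_cancel₀ _ (ne_of_gt hst)
        have h6 : (|K| / (s - t) + 1) * (s - t) ≤ R * (s - t) :=
          mul_le_mul_of_nonneg_right hRK hst.le
        have h7 : (|K| / (s - t) + 1) * (s - t) = |K| + (s - t) := by
          rw [add_mul, h2, one_mul]
        linarith
      have hgoal : t * R ≤ Real.log (μ (Metric.ball y R)).toReal := by
        have h8 : -|K| ≤ K := neg_abs_le K
        have h9 : t * R = s * R - (s - t) * R := by ring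
        linarith
      calc (t : ℝ) = R⁻¹ * (t * R) := by field_simp
        _ ≤ R⁻¹ * Real.log (μ (Metric.ball y R)).toReal :=
            mul_le_mul_of_nonneg_left hgoal (inv_nonneg.2 hRpos.le)

end AuxFreeSemigroup

/-- displacement bounds for the generators of a free semigroup acting
properly on a metric measure space of entropy at most `H`. -/
theorem free_semigroup_displacement_bounds
    {Γ : Type*} [Group Γ] {Y : Type*} [MetricSpace Y] [MeasurableSpace Y] [BorelSpace Y]
    [MulAction Γ Y]
    (γ₁ γ₂ : Γ) (hgen : Subgroup.closure ({γ₁, γ₂} : Set Γ) = ⊤)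
    (c : Γ) (hc : c = γ₂ ∨ c = γ₂⁻¹) (hfree : FreeSemigroupPair γ₁ c)
    (hiso : IsIsometricAction Γ Y) (hproper : IsProperAction Γ Y)
    (μ : MeasureTheory.Measure Y) (hμ : μ ≠ 0)
    (hinv : ∀ γ : Γ, MeasureTheory.MeasurePreserving (fun y : Y => γ • y) μ μ)
    (H : ℝ) (hent : ∀ y : Y, mmEntropy μ y ≤ (H : EReal)) :
    (∀ g ∈ Submonoid.closure ({γ₁, c} : Set Γ), g ≠ 1 → ∀ y : Y, g • y ≠ y) ∧
    ∀ y : Y,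
      ((Real.log 2 : ℝ) : EReal) ≤
          mmEntropy μ y * ((max (dist y (γ₁ • y)) (dist y (γ₂ • y)) : ℝ) : EReal) ∧
      1 / H * Real.exp (-H * max (dist y (γ₁ • y)) (dist y (γ₂ • y))) <
        min (dist y (γ₁ • y)) (dist y (γ₂ • y)) := by
  classical
  refine ⟨aux_nofix γ₁ c hfree hproper, fun y => ?_⟩
  have hdc : dist y (c • y) = dist y (γ₂ • y) := by
    rcases hc with rfl | rfl
    · rfl
    · have hI : dist (γ₂ • y) (γ₂ • (γ₂⁻¹ • y)) = dist y (γ₂⁻¹ • y) :=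
        (hiso γ₂).dist_eq y (γ₂⁻¹ • y)
      rw [smul_inv_smul] at hI
      rw [← hI, dist_comm]
  rw [← hdc]
  have hnf := aux_nofix γ₁ c hfree hproper
  have ha1 : γ₁ ≠ 1 := by
    intro h
    have h2 : (FreeMonoid.lift fun x : Bool => bif x then γ₁ else c) (FreeMonoid.of true)
        = (FreeMonoid.lift fun x : Bool => bif x then γ₁ else c) 1 := by
      rw [map_one, FreeMonoid.lift_eval_of]
      exact h
    exact FreeMonoid.of_ne_one true (hfree h2)
  have hc1 : c ≠ 1 := by
    intro h
    have h2 : (FreeMonoid.lift fun x : Bool => bif x then γ₁ else c) (FreeMonoid.of false)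
        = (FreeMonoid.lift fun x : Bool => bif x then γ₁ else c) 1 := by
      rw [map_one, FreeMonoid.lift_eval_of]
      exact h
    exact FreeMonoid.of_ne_one false (hfree h2)
  have hw1 : 0 < dist y (γ₁ • y) :=
    dist_pos.2 (Ne.symm (hnf γ₁ (Submonoid.subset_closure (Set.mem_insert _ _)) ha1 y))
  have hw2 : 0 < dist y (c • y) :=
    dist_pos.2 (Ne.symm (hnf c (Submonoid.subset_closure (Set.mem_insert_of_mem _ rfl)) hc1 y))
  set Mx := max (dist y (γ₁ • y)) (dist y (c • y)) with hMx
  set mn := min (dist y (γ₁ • y)) (dist y (c • y)) with hmn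
  have hMxpos : 0 < Mx := lt_of_lt_of_le hw1 (le_max_left _ _)
  have hlog2 : 0 < Real.log 2 := Real.log_pos one_lt_two
  set s₀ := Real.log 2 / Mx with hs₀
  have hs₀pos : 0 < s₀ := div_pos hlog2 hMxpos
  have hsum₀ : 1 ≤ Real.exp (-(s₀ * dist y (γ₁ • y))) + Real.exp (-(s₀ * dist y (c • y))) := by
    have hhalf : ∀ w : ℝ, 0 < w → w ≤ Mx → (1 : ℝ) / 2 ≤ Real.exp (-(s₀ * w)) := by
      intro w hwpos hwle
      have h1 : -(s₀ * Mx) ≤ -(s₀ * w) := by nlinarith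
      have h2 : Real.exp (-(s₀ * Mx)) = 1 / 2 := by
        rw [hs₀, div_mul_cancel₀ _ (ne_of_gt hMxpos), Real.exp_neg, Real.exp_log two_pos]
        norm_num
      calc (1 : ℝ) / 2 = Real.exp (-(s₀ * Mx)) := h2.symm
        _ ≤ Real.exp (-(s₀ * w)) := Real.exp_le_exp.2 h1
    have g1 := hhalf _ hw1 (le_max_left _ _)
    have g2 := hhalf _ hw2 (le_max_right _ _)
    linarith
  have hEnt₀ : (s₀ : EReal) ≤ mmEntropy μ y :=
    aux_entropy_lb γ₁ c hfree hiso hproper μ hμ hinv y s₀ hs₀pos hsum₀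
  have hEntH := hent y
  have hne_top : mmEntropy μ y ≠ ⊤ := (lt_of_le_of_lt hEntH (EReal.coe_lt_top H)).ne
  have hne_bot : mmEntropy μ y ≠ ⊥ := by
    intro h
    rw [h] at hEnt₀
    exact absurd hEnt₀ (by simp)
  set e := (mmEntropy μ y).toReal with he
  have hE : mmEntropy μ y = (e : EReal) := (EReal.coe_toReal hne_top hne_bot).symm
  have hse : s₀ ≤ e := by
    rw [hE] at hEnt₀
    exact_mod_cast hEnt₀
  have heH : e ≤ H := by
    rw [hE] at hEntH
    exact_mod_cast hEntH
  have hHpos : 0 < H := lt_of_lt_of_le hs₀pos (hse.trans heH)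
  constructor
  · rw [hE, ← EReal.coe_mul, EReal.coe_le_coe_iff]
    calc Real.log 2 = s₀ * Mx := by
          rw [hs₀, div_mul_cancel₀ _ (ne_of_gt hMxpos)]
      _ ≤ e * Mx := mul_le_mul_of_nonneg_right hse hMxpos.le
  · -- part (ii)
    have hkey : Real.exp (-(H * dist y (γ₁ • y))) + Real.exp (-(H * dist y (c • y))) ≤ 1 := by
      by_contra hgt
      push_neg at hgt
      set E1 := Real.exp (-(H * dist y (γ₁ • y))) with hE1
      set E2 := Real.exp (-(H * dist y (c • y))) with hE2
      have hE1pos : 0 < E1 := Real.exp_pos _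
      have hE2pos : 0 < E2 := Real.exp_pos _
      set K := dist y (γ₁ • y) * E1 + dist y (c • y) * E2 with hK
      have hKpos : 0 < K := by positivity
      set t := (E1 + E2 - 1) / (2 * K) with ht
      have htpos : 0 < t := div_pos (by linarith) (by linarith)
      have hgen : ∀ w : ℝ, 0 ≤ w →
          Real.exp (-(H * w)) * (1 - t * w) ≤ Real.exp (-((H + t) * w)) := by
        intro w hw
        have h1 : Real.exp (-((H + t) * w)) = Real.exp (-(H * w)) * Real.exp (-(t * w)) := by
          rw [← Real.exp_add]
          ring_nf
        rw [h1]
        have h2 : 1 - t * w ≤ Real.exp (-(t * w)) := by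
          have := Real.add_one_le_exp (-(t * w))
          linarith
        exact mul_le_mul_of_nonneg_left h2 (Real.exp_pos _).le
      have g1 := hgen _ hw1.le
      have g2 := hgen _ hw2.le
      have hexp : E1 * (1 - t * dist y (γ₁ • y)) + E2 * (1 - t * dist y (c • y))
          = E1 + E2 - t * K := by
        rw [hK]
        ring
      have htK : t * K = (E1 + E2 - 1) / 2 := by
        rw [ht]
        field_simp
      have hsum' : 1 ≤ Real.exp (-((H + t) * dist y (γ₁ • y)))
          + Real.exp (-((H + t) * dist y (c • y))) := by
        linarith
      have hcontra := aux_entropy_lb γ₁ c hfree hiso hproper μ hμ hinv y (H + t)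
        (by linarith) hsum'
      have hcontra' : H + t ≤ e := by
        rw [hE] at hcontra
        exact_mod_cast hcontra
      linarith
    have hkey2 : Real.exp (-(H * mn)) + Real.exp (-(H * Mx)) ≤ 1 := by
      rcases le_total (dist y (γ₁ • y)) (dist y (c • y)) with hle | hle
      · rw [hmn, hMx, min_eq_left hle, max_eq_right hle]
        linarith
      · rw [hmn, hMx, min_eq_right hle, max_eq_left hle]
        linarith
    set x := Real.exp (-(H * Mx)) with hx
    have hxpos : 0 < x := Real.exp_pos _
    have hmnpos : 0 < mn := lt_min hw1 hw2
    have hstep : Real.exp (-(H * mn)) < Real.exp (-x) := by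
      have h2 : 1 - x < Real.exp (-x) := by
        have := Real.add_one_lt_exp (show -x ≠ 0 by linarith)
        linarith
      linarith
    have hlt : x < H * mn := by
      have := Real.exp_lt_exp.1 hstep
      linarith
    have harg : -H * Mx = -(H * Mx) := by ring
    rw [harg, ← hx, one_div_mul_eq_div, div_lt_iff₀ hHpos]
    linarith
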